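/- Let (A, C) be an orthogonal pair of a finite poset P, where A is a k-antichain family, and let P_A be the subposet induced on the union of the antichains in A. If A' is the canonical antichain partition of P_A, then (A', C) is again an orthogonal pair of P. -/

import Mathlib

open Finset

/-- The canonical antichain partition (0-indexed) of the subposet induced on `S`,
with respect to a strict relation `lt`: `canonAntichain lt S 0` is the set of
minimal elements of `S`, and `canonAntichain lt S j` is the set of minimal elements
of what remains of `S` after removing the earlier antichains. -/
noncomputable def canonAntichain {α : Type*} [DecidableEq α] (lt : α → α → Prop) (S : Finset α) :
    ℕ → Finset α
  | j =>
    let R := S \ (Finset.range j).attach.biUnion (fun i => canonAntichain lt S i.1)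
    @Finset.filter α (fun x => ∀ y ∈ R, ¬ lt y x) (fun _ => Classical.dec _) R
  decreasing_by exact Finset.mem_range.mp i.2

section Lemmas
variable {α : Type*} [DecidableEq α] [PartialOrder α] (S : Finset α)

noncomputable def Rem (j : ℕ) : Finset α :=
  S \ (Finset.range j).attach.biUnion (fun i => canonAntichain (· < ·) S i.1)

theorem mem_canon (j : ℕ) (x : α) :
    x ∈ canonAntichain (· < ·) S j ↔ x ∈ Rem S j ∧ ∀ y ∈ Rem S j, ¬ y < x := by
  rw [canonAntichain]; simp only [Rem, Finset.mem_filter]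

theorem mem_Rem (j : ℕ) (x : α) :
    x ∈ Rem S j ↔ x ∈ S ∧ ∀ i < j, x ∉ canonAntichain (· < ·) S i := by
  simp [Rem]

theorem Rem_anti {j j' : ℕ} (h : j ≤ j') : Rem S j' ⊆ Rem S j := by
  intro x hx
  rw [mem_Rem] at hx ⊢
  exact ⟨hx.1, fun i hi => hx.2 i (lt_of_lt_of_le hi h)⟩

theorem canon_subset_Rem (j : ℕ) : canonAntichain (· < ·) S j ⊆ Rem S j :=
  fun x hx => ((mem_canon S j x).mp hx).1

theorem Rem_succ (j : ℕ) : Rem S (j + 1) = Rem S j \ canonAntichain (· < ·) S j := by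
  ext x
  simp only [mem_Rem, Finset.mem_sdiff]
  constructor
  · rintro ⟨h1, h2⟩
    exact ⟨⟨h1, fun i hi => h2 i (Nat.lt_succ_of_lt hi)⟩, h2 j (Nat.lt_succ_self j)⟩
  · rintro ⟨⟨h1, h2⟩, h3⟩
    refine ⟨h1, fun i hi => ?_⟩
    rcases Nat.lt_succ_iff_lt_or_eq.mp hi with hi | rfl
    · exact h2 i hi
    · exact h3

/-- level disjointness -/
theorem canon_level_unique {j j' : ℕ} {x : α} (h : x ∈ canonAntichain (· < ·) S j)
    (h' : x ∈ canonAntichain (· < ·) S j') : j = j' := by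
  by_contra hne
  rcases Nat.lt_or_ge j j' with hlt | hge
  · exact ((mem_Rem S j' x).mp (canon_subset_Rem S j' h')).2 j hlt h
  · have : j' < j := lt_of_le_of_ne hge (Ne.symm hne)
    exact ((mem_Rem S j x).mp (canon_subset_Rem S j h)).2 j' this h'

/-- if y < x and both have levels then level y < level x -/
theorem canon_level_mono {a b : ℕ} {x y : α} (hy : y ∈ canonAntichain (· < ·) S a)
    (hx : x ∈ canonAntichain (· < ·) S b) (hlt : y < x) : a < b := by
  by_contra h
  push_neg at h
  have hyR : y ∈ Rem S b := Rem_anti S h (canon_subset_Rem S a hy)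
  exact ((mem_canon S b x).mp hx).2 y hyR hlt

/-- L1: an element of `Rem S j`, j > 0, has something of level j-1 below it. -/
theorem exists_below {j : ℕ} {x : α} (hx : x ∈ Rem S (j + 1)) :
    ∃ y ∈ canonAntichain (· < ·) S j, y < x := by
  have hxj : x ∈ Rem S j := Rem_anti S (Nat.le_succ j) hx
  have hxnot : x ∉ canonAntichain (· < ·) S j :=
    ((mem_Rem S (j+1) x).mp hx).2 j (Nat.lt_succ_self j)
  have hnm : ¬ ∀ y ∈ Rem S j, ¬ y < x := by
    intro h
    exact hxnot ((mem_canon S j x).mpr ⟨hxj, h⟩)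
  push_neg at hnm
  obtain ⟨z, hz, hzx⟩ := hnm
  classical
  -- take a minimal element of {z ∈ Rem S j | z < x}
  obtain ⟨y, hy, hymin⟩ : ∃ y ∈ Finset.filter (· < x) (Rem S j),
      ∀ w ∈ Finset.filter (· < x) (Rem S j), ¬ w < y := by
    obtain ⟨m, hm⟩ := Finset.exists_minimal (s := Finset.filter (· < x) (Rem S j))
      ⟨z, Finset.mem_filter.mpr ⟨hz, hzx⟩⟩
    exact ⟨m, hm.prop, fun w hw => hm.not_lt hw⟩
  rw [Finset.mem_filter] at hy
  refine ⟨y, (mem_canon S j y).mpr ⟨hy.1, fun w hw hwy => ?_⟩, hy.2⟩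
  exact hymin w (Finset.mem_filter.mpr ⟨hw, lt_trans hwy hy.2⟩) hwy

theorem canon_nonempty_of_Rem {j : ℕ} (h : (Rem S j).Nonempty) :
    (canonAntichain (· < ·) S j).Nonempty := by
  obtain ⟨y, hy, hymin⟩ : ∃ y ∈ Rem S j, ∀ w ∈ Rem S j, ¬ w < y := by
    obtain ⟨m, hm⟩ := Finset.exists_minimal h
    exact ⟨m, hm.prop, fun w hw => hm.not_lt hw⟩
  exact ⟨y, (mem_canon S j y).mpr ⟨hy, hymin⟩⟩

theorem Rem_card (j : ℕ) : Rem S j = ∅ ∨ (Rem S j).card + j ≤ S.card := by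
  induction j with
  | zero =>
    right
    have : Rem S 0 ⊆ S := by simp [Rem]
    simpa using Finset.card_le_card this
  | succ n ih =>
    rcases Finset.eq_empty_or_nonempty (Rem S n) with he | hne
    · left
      have := Rem_anti S (Nat.le_succ n)
      rw [he] at this
      exact Finset.subset_empty.mp this
    · right
      rcases ih with he | hc
      · exact absurd he (Finset.nonempty_iff_ne_empty.mp hne)
      obtain ⟨y, hy⟩ := canon_nonempty_of_Rem S hne
      have hsub : Rem S (n+1) ⊆ Rem S n \ {y} := by
        rw [Rem_succ]
        exact Finset.sdiff_subset_sdiff (le_refl _) (Finset.singleton_subset_iff.mpr hy)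
      have hcard : (Rem S (n+1)).card ≤ (Rem S n).card - 1 := by
        calc (Rem S (n+1)).card ≤ (Rem S n \ {y}).card := Finset.card_le_card hsub
        _ = (Rem S n).card - 1 := by
            rw [Finset.card_sdiff_of_subset (Finset.singleton_subset_iff.mpr
              (canon_subset_Rem S n hy))]
            simp
      have h1 : 1 ≤ (Rem S n).card := Finset.card_pos.mpr hne
      omega

/-- coverage -/
theorem canon_cover {x : α} (hx : x ∈ S) : ∃ j, x ∈ canonAntichain (· < ·) S j := by
  by_contra h
  push_neg at h
  have : ∀ j, x ∈ Rem S j := by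
    intro j
    induction j with
    | zero => simpa [Rem] using hx
    | succ n ih =>
      rw [Rem_succ, Finset.mem_sdiff]
      exact ⟨ih, h n⟩
  have h1 := this (S.card + 1)
  rcases Rem_card S (S.card + 1) with he | hc
  · rw [he] at h1; exact absurd h1 (Finset.notMem_empty x)
  · have : 1 ≤ (Rem S (S.card + 1)).card := Finset.card_pos.mpr ⟨x, h1⟩
    omega

/-- each level is an antichain -/
theorem canon_antichain (j : ℕ) {x y : α} (hx : x ∈ canonAntichain (· < ·) S j)
    (hy : y ∈ canonAntichain (· < ·) S j) : ¬ x < y :=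
  fun h => ((mem_canon S j y).mp hy).2 x (canon_subset_Rem S j hx) h

/-- chain below an element of level j -/
theorem canon_chain {j : ℕ} {x : α} (hx : x ∈ canonAntichain (· < ·) S j) :
    ∃ f : ℕ → α, StrictMonoOn f (Set.Iic j) ∧ (∀ i ≤ j, f i ∈ canonAntichain (· < ·) S i)
      ∧ f j = x := by
  induction j generalizing x with
  | zero =>
    exact ⟨fun _ => x, fun a ha b hb hab => by
      simp only [Set.mem_Iic, Nat.le_zero] at ha hb; omega,
      fun i hi => by rw [Nat.le_zero.mp hi]; exact hx, rfl⟩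
  | succ n ih =>
    obtain ⟨y, hy, hyx⟩ := exists_below S (canon_subset_Rem S (n+1) hx)
    obtain ⟨f, hf1, hf2, hf3⟩ := ih hy
    refine ⟨fun i => if i ≤ n then f i else x, ?_, ?_, by simp⟩
    · intro a ha b hb hab
      simp only [Set.mem_Iic] at ha hb
      by_cases hbn : b ≤ n
      · have han : a ≤ n := le_of_lt (lt_of_lt_of_le hab hbn)
        simp only [han, hbn, if_pos]
        exact hf1 han hbn hab
      · have hb' : ¬ b ≤ n := hbn
        simp only [hb', if_neg, not_false_iff, if_false]
        by_cases han : a ≤ n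
        · simp only [han, if_pos]
          rcases lt_or_eq_of_le han with h | rfl
          · exact lt_trans (hf1 (le_of_lt h) (le_refl n) h) (hf3 ▸ hyx)
          · exact hf3 ▸ hyx
        · omega
    · intro i hi
      by_cases hin : i ≤ n
      · simp only [hin, if_pos]; exact hf2 i hin
      · have : i = n + 1 := by omega
        simp only [hin, if_neg, not_false_iff, if_false]
        exact this ▸ hx

end Lemmas


/-- Let `(A, C)` be an orthogonal pair of a finite poset `P` (every element lies in
some antichain of `A` or some chain of `C`, and each antichain meets each chain in
exactly one element).  If `A'` is the canonical antichain partition of the subposet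
induced on the union of the antichains of `A`, then `(A', C)` is again an orthogonal
pair of `P`. -/
theorem canonical_partition_orthogonal {α : Type*} [Fintype α] [DecidableEq α]
    [PartialOrder α] (k ℓ : ℕ) (A : Fin k → Finset α) (C : Fin ℓ → Finset α)
    (hA : ∀ i, IsAntichain (· ≤ ·) (A i : Set α))
    (hAdisj : Pairwise fun i j => Disjoint (A i) (A j))
    (hC : ∀ j, IsChain (· ≤ ·) (C j : Set α))
    (hCdisj : Pairwise fun i j => Disjoint (C i) (C j))
    (hcover : ∀ x : α, (∃ i, x ∈ A i) ∨ (∃ j, x ∈ C j))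
    (horth : ∀ i j, (A i ∩ C j).card = 1) :
    let XA : Finset α := Finset.univ.biUnion A
    let A' : ℕ → Finset α := canonAntichain (· < ·) XA
    (∀ x : α, (∃ i, x ∈ A' i) ∨ (∃ j, x ∈ C j)) ∧
    (∀ i j, (A' i).Nonempty → (A' i ∩ C j).card = 1) := by
  classical
  intro XA A'
  have hmemXA : ∀ x : α, x ∈ XA ↔ ∃ i, x ∈ A i := by
    intro x; simp [XA]
  -- subset of XA
  have hsubXA : ∀ m (x : α), x ∈ A' m → x ∈ XA := by
    intro m x hx
    exact ((mem_Rem XA m x).mp (canon_subset_Rem XA m hx)).1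
  -- bound: every nonempty level index is < k
  have hbound : ∀ m (x : α), x ∈ A' m → m < k := by
    intro m x hx
    obtain ⟨f, hf1, hf2, hf3⟩ := canon_chain XA hx
    -- map each f i to the index of the antichain containing it
    have hidx : ∀ i ≤ m, ∃ a : Fin k, f i ∈ A a := by
      intro i hi
      exact (hmemXA (f i)).mp (hsubXA i (f i) (hf2 i hi))
    set g : ℕ → Fin k := fun i => if h : i ≤ m then Classical.choose (hidx i h) else
      Classical.choose (hidx m le_rfl) with hg
    have hgmem : ∀ i ≤ m, f i ∈ A (g i) := by
      intro i hi
      simp only [hg, dif_pos hi]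
      exact Classical.choose_spec (hidx i hi)
    have hinj : Set.InjOn g (Finset.range (m+1)) := by
      intro a ha b hb hab
      simp only [Finset.coe_range, Set.mem_Iio, Nat.lt_succ_iff] at ha hb
      by_contra hne
      rcases Ne.lt_or_gt hne with h | h
      · have hlt : f a < f b := hf1 ha hb h
        exact hA (g a) (hgmem a ha) (hab ▸ hgmem b hb) (ne_of_lt hlt) (le_of_lt hlt)
      · have hlt : f b < f a := hf1 hb ha h
        exact hA (g a) (hab ▸ hgmem b hb) (hgmem a ha) (ne_of_lt hlt) (le_of_lt hlt)
    have := Finset.card_le_card_of_injOn g (fun a _ => Finset.mem_univ (g a)) hinj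
    simp only [Finset.card_range, Finset.card_univ, Fintype.card_fin] at this
    omega
  constructor
  · intro x
    rcases hcover x with ⟨i, hi⟩ | h
    · left
      exact canon_cover XA ((hmemXA x).mpr ⟨i, hi⟩)
    · right; exact h
  · intro i j ⟨x, hx⟩
    have hik : i < k := hbound i x hx
    -- the chain C j meets XA in exactly k points
    have hc1 : ∀ a : Fin k, ∃ e, A a ∩ C j = {e} :=
      fun a => Finset.card_eq_one.mp (horth a j)
    set c : Fin k → α := fun a => Classical.choose (hc1 a) with hcdef
    have hcspec : ∀ a, A a ∩ C j = {c a} := fun a => Classical.choose_spec (hc1 a)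
    have hcmem : ∀ a, c a ∈ A a ∩ C j := by
      intro a; rw [hcspec a]; exact Finset.mem_singleton_self _
    have hcinj : Function.Injective c := by
      intro a b hab
      by_contra hne
      exact Finset.disjoint_left.mp (hAdisj hne) (Finset.mem_inter.mp (hcmem a)).1
        (hab ▸ (Finset.mem_inter.mp (hcmem b)).1)
    set T : Finset α := C j ∩ XA with hT
    have hTeq : T = Finset.image c Finset.univ := by
      ext y
      simp only [hT, Finset.mem_inter, Finset.mem_image, Finset.mem_univ, true_and]
      constructor
      · rintro ⟨hy1, hy2⟩
        obtain ⟨a, ha⟩ := (hmemXA y).mp hy2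
        refine ⟨a, ?_⟩
        have : y ∈ A a ∩ C j := Finset.mem_inter.mpr ⟨ha, hy1⟩
        rw [hcspec a] at this
        exact (Finset.mem_singleton.mp this).symm
      · rintro ⟨a, rfl⟩
        have h1 := Finset.mem_inter.mp (hcmem a)
        exact ⟨h1.2, (hmemXA _).mpr ⟨a, h1.1⟩⟩
    have hTcard : T.card = k := by
      rw [hTeq, Finset.card_image_of_injective _ hcinj]
      simp
    -- levels of elements of T
    have hlev : ∀ y ∈ T, ∃ m, y ∈ A' m := by
      intro y hy
      exact canon_cover XA (Finset.mem_inter.mp hy).2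
    set lev : α → ℕ := fun y => if h : ∃ m, y ∈ A' m then Nat.find h else 0 with hlevdef
    have hlevmem : ∀ y ∈ T, y ∈ A' (lev y) := by
      intro y hy
      have h := hlev y hy
      simp only [hlevdef, dif_pos h]
      exact Nat.find_spec h
    have hlevinj : Set.InjOn lev (T : Set α) := by
      intro a ha b hb hab
      by_contra hne
      have hcomp : a ≤ b ∨ b ≤ a := by
        rcases (hC j).total (Finset.mem_inter.mp ha).1 (Finset.mem_inter.mp hb).1 with h | h
        · exact Or.inl h
        · exact Or.inr h
      rcases hcomp with h | h
      · have : lev a < lev b := canon_level_mono XA (hlevmem a ha) (hlevmem b hb)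
          (lt_of_le_of_ne h hne)
        omega
      · have : lev b < lev a := canon_level_mono XA (hlevmem b hb) (hlevmem a ha)
          (lt_of_le_of_ne h (Ne.symm hne))
        omega
    have himg : Finset.image lev T = Finset.range k := by
      apply Finset.eq_of_subset_of_card_le
      · intro m hm
        obtain ⟨y, hy, rfl⟩ := Finset.mem_image.mp hm
        exact Finset.mem_range.mpr (hbound _ y (hlevmem y hy))
      · rw [Finset.card_range, Finset.card_image_of_injOn hlevinj, hTcard]
    have hiT : ∃ y ∈ T, lev y = i := by
      have : i ∈ Finset.image lev T := himg ▸ Finset.mem_range.mpr hik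
      obtain ⟨y, hy, hyl⟩ := Finset.mem_image.mp this
      exact ⟨y, hy, hyl⟩
    obtain ⟨y, hy, hyl⟩ := hiT
    have hymem : y ∈ A' i ∩ C j :=
      Finset.mem_inter.mpr ⟨hyl ▸ hlevmem y hy, (Finset.mem_inter.mp hy).1⟩
    have hle1 : (A' i ∩ C j).card ≤ 1 := by
      apply Finset.card_le_one.mpr
      intro a ha b hb
      rw [Finset.mem_inter] at ha hb
      by_contra hne
      rcases (hC j).total ha.2 hb.2 with h | h
      · exact canon_antichain XA i ha.1 hb.1 (lt_of_le_of_ne h hne)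
      · exact canon_antichain XA i hb.1 ha.1 (lt_of_le_of_ne h (Ne.symm hne))
    have hpos : 0 < (A' i ∩ C j).card := Finset.card_pos.mpr ⟨y, hymem⟩
    omega
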